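/- arXiv:1410.7912 — 2 statements merged into one kernel-verified Lean document; each statement's English description precedes it below -/
import Mathlib

section
/- Let X = Σ_{i=1}^n X_i where X₁,…,X_n are {0,1}-valued random variables satisfying Pr[∀ i ∈ I : X_i = 1] ≤ ∏_{i∈I} Pr[X_i=1] for all I ⊆ {1,…,n}, and suppose E[X] ≤ μ. Then for any δ > 0, Pr[X ≥ (1+δ)μ] ≤ (e^δ/(1+δ)^{1+δ})^μ (the Chernoff upper-tail bound holds under this negative correlation condition). -/
open MeasureTheory Finset

/-- Chernoff upper-tail bound under negative correlation: if `X = Σ_{i=1}^n X_i` with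
`{0,1}`-valued random variables satisfying `Pr[∀ i ∈ I, X_i = 1] ≤ ∏_{i ∈ I} Pr[X_i = 1]`
for all subsets `I`, and `E[X] ≤ μ`, then for any `δ > 0`,
`Pr[X ≥ (1+δ)μ] ≤ (e^δ / (1+δ)^{1+δ})^μ`. -/
theorem stmt10 {Ω : Type*} [Fintype Ω] [MeasurableSpace Ω] [MeasurableSingletonClass Ω]
    (P : Measure Ω) [IsProbabilityMeasure P] (n : ℕ) (X : Fin n → Ω → ℕ)
    (hX : ∀ (i : Fin n) (ω : Ω), X i ω ≤ 1)
    (hneg : ∀ I : Finset (Fin n),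
      P (⋂ i ∈ I, {ω | X i ω = 1}) ≤ ∏ i ∈ I, P {ω | X i ω = 1})
    (μ δ : ℝ) (hμ : 0 ≤ μ) (hδ : 0 < δ)
    (hE : ∫ ω, (∑ i : Fin n, (X i ω : ℝ)) ∂P ≤ μ) :
    (P {ω | (1 + δ) * μ ≤ ∑ i : Fin n, (X i ω : ℝ)}).toReal
      ≤ (Real.exp δ / (1 + δ) ^ ((1 : ℝ) + δ)) ^ μ := by
  classical
  set t := Real.log (1 + δ) with ht_def
  have h1δ : (0:ℝ) < 1 + δ := by linarith
  have ht : 0 < t := Real.log_pos (by linarith)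
  have hexp_t : Real.exp t = 1 + δ := Real.exp_log h1δ
  have hmeas : ∀ (f : Ω → ℝ), Integrable f P := fun f => Integrable.of_finite
  -- pointwise identity
  have hpt : ∀ ω, Real.exp (t * ∑ i : Fin n, (X i ω : ℝ))
      = ∏ i : Fin n, (δ * (X i ω : ℝ) + 1) := by
    intro ω
    rw [Finset.mul_sum, Real.exp_sum]
    refine Finset.prod_congr rfl fun i _ => ?_
    rcases Nat.le_one_iff_eq_zero_or_eq_one.mp (hX i ω) with h | h
    · simp [h]
    · simp [h, hexp_t]; ring
  -- integral of products as measures of intersections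
  have hprod_int : ∀ I : Finset (Fin n),
      ∫ ω, ∏ i ∈ I, (X i ω : ℝ) ∂P = (P (⋂ i ∈ I, {ω | X i ω = 1})).toReal := by
    intro I
    have hA : MeasurableSet (⋂ i ∈ I, {ω | X i ω = 1}) := (Set.toFinite _).measurableSet
    have heq : (fun ω => ∏ i ∈ I, (X i ω : ℝ))
        = Set.indicator (⋂ i ∈ I, {ω | X i ω = 1}) (fun _ => (1:ℝ)) := by
      funext ω
      by_cases hω : ω ∈ ⋂ i ∈ I, {ω | X i ω = 1}
      · rw [Set.indicator_of_mem hω]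
        simp only [Set.mem_iInter, Set.mem_setOf_eq] at hω
        exact Finset.prod_eq_one fun i hi => by simp [hω i hi]
      · rw [Set.indicator_of_notMem hω]
        simp only [Set.mem_iInter, Set.mem_setOf_eq, not_forall] at hω
        obtain ⟨i, hi, hne⟩ := hω
        refine Finset.prod_eq_zero hi ?_
        have h0 : X i ω = 0 := by have := hX i ω; omega
        simp [h0]
    rw [heq, integral_indicator_const _ hA, smul_eq_mul, mul_one, Measure.real]
  have hp_ne_top : ∀ i : Fin n, P {ω | X i ω = 1} ≠ ⊤ := fun i => measure_ne_top _ _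
  have hmgf : ∫ ω, Real.exp (t * ∑ i : Fin n, (X i ω : ℝ)) ∂P ≤ Real.exp (δ * μ) := by
    calc ∫ ω, Real.exp (t * ∑ i : Fin n, (X i ω : ℝ)) ∂P
        = ∫ ω, ∏ i : Fin n, (δ * (X i ω : ℝ) + 1) ∂P := by simp_rw [hpt]
      _ = ∑ I ∈ (univ : Finset (Fin n)).powerset,
            δ ^ I.card * (P (⋂ i ∈ I, {ω | X i ω = 1})).toReal := by
          have : ∀ ω, ∏ i : Fin n, (δ * (X i ω : ℝ) + 1)
              = ∑ I ∈ (univ : Finset (Fin n)).powerset,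
                  δ ^ I.card * ∏ i ∈ I, (X i ω : ℝ) := by
            intro ω
            rw [Finset.prod_add]
            refine Finset.sum_congr rfl fun I hI => ?_
            rw [Finset.prod_mul_distrib, Finset.prod_const]
            simp [mul_assoc]
          simp_rw [this]
          rw [integral_finset_sum _ (fun I _ => hmeas _)]
          exact Finset.sum_congr rfl fun I _ => by rw [integral_const_mul, hprod_int]
      _ ≤ ∑ I ∈ (univ : Finset (Fin n)).powerset,
            δ ^ I.card * ∏ i ∈ I, (P {ω | X i ω = 1}).toReal := by
          refine Finset.sum_le_sum fun I _ => ?_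
          refine mul_le_mul_of_nonneg_left ?_ (pow_nonneg hδ.le _)
          rw [← ENNReal.toReal_prod]
          exact ENNReal.toReal_mono (ENNReal.prod_ne_top fun i _ => hp_ne_top i) (hneg I)
      _ = ∏ i : Fin n, (δ * (P {ω | X i ω = 1}).toReal + 1) := by
          rw [Finset.prod_add]
          refine (Finset.sum_congr rfl fun I hI => ?_).symm
          rw [Finset.prod_mul_distrib, Finset.prod_const]
          simp [mul_assoc]
      _ ≤ ∏ i : Fin n, Real.exp (δ * (P {ω | X i ω = 1}).toReal) := by
          refine Finset.prod_le_prod (fun i _ => ?_) (fun i _ => Real.add_one_le_exp _)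
          positivity
      _ = Real.exp (δ * ∑ i : Fin n, (P {ω | X i ω = 1}).toReal) := by
          rw [Finset.mul_sum, Real.exp_sum]
      _ ≤ Real.exp (δ * μ) := by
          refine Real.exp_le_exp.mpr (mul_le_mul_of_nonneg_left ?_ hδ.le)
          have : ∑ i : Fin n, (P {ω | X i ω = 1}).toReal
              = ∫ ω, (∑ i : Fin n, (X i ω : ℝ)) ∂P := by
            rw [integral_finset_sum _ (fun i _ => hmeas _)]
            refine (Finset.sum_congr rfl fun i _ => ?_).symm
            have := hprod_int {i}
            simpa using this
          rw [this]; exact hE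
  have hch := ProbabilityTheory.measure_ge_le_exp_mul_mgf
    (X := fun ω => ∑ i : Fin n, (X i ω : ℝ)) (μ := P) (t := t)
    ((1 + δ) * μ) ht.le (hmeas _)
  have hrhs : Real.exp (-t * ((1 + δ) * μ)) * Real.exp (δ * μ)
      = (Real.exp δ / (1 + δ) ^ ((1 : ℝ) + δ)) ^ μ := by
    rw [Real.div_rpow (Real.exp_nonneg _) (Real.rpow_nonneg h1δ.le _),
      ← Real.exp_mul, ← Real.rpow_mul h1δ.le,
      Real.rpow_def_of_pos h1δ, ← Real.exp_add, ← Real.exp_sub]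
    congr 1
    ring
  calc (P {ω | (1 + δ) * μ ≤ ∑ i : Fin n, (X i ω : ℝ)}).toReal
      ≤ Real.exp (-t * ((1 + δ) * μ)) * ProbabilityTheory.mgf (fun ω => ∑ i : Fin n, (X i ω : ℝ)) P t := hch
    _ ≤ Real.exp (-t * ((1 + δ) * μ)) * Real.exp (δ * μ) := by
        exact mul_le_mul_of_nonneg_left hmgf (Real.exp_nonneg _)
    _ = (Real.exp δ / (1 + δ) ^ ((1 : ℝ) + δ)) ^ μ := hrhs
end

section
/- If each of n nodes sends at most one message during a protocol execution and X_i is the indicator that node i sends, then the total number of messages X = Σ X_i satisfies E[X] = Σ_{i=1}^n Pr[X_i = 1] (linearity of expectation for indicator sums), and combining with the per-node bound of Lemma 3 yields E[X] ≤ 2·log₂ N + 1. -/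
open MeasureTheory Finset

/-- If each node sends at most one message and `X i` is the indicator that node `i` (holding the
`(i+1)`-st largest value) sends, then `E[Σ X_i] = Σ Pr[X_i = 1]` (linearity of expectation), and
combining with the per-node bound `Pr[X_i = 1] ≤ 1/N + Σ_{r=1}^{log₂ N} (2^r/N)(1-2^{r-1}/N)^{i+1}`
yields `E[X] ≤ 2·log₂ N + 1`. -/
theorem stmt14 {Ω : Type*} [Fintype Ω] [MeasurableSpace Ω] [MeasurableSingletonClass Ω]
    (P : Measure Ω) [IsProbabilityMeasure P] (N n : ℕ) (hpow : ∃ m : ℕ, N = 2 ^ m) (hn : n ≤ N)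
    (X : Fin n → Ω → ℕ) (hX : ∀ (i : Fin n) (ω : Ω), X i ω ≤ 1)
    (hbound : ∀ i : Fin n, (P {ω | X i ω = 1}).toReal
      ≤ 1 / (N : ℝ) + ∑ r ∈ Finset.Icc 1 (Nat.log 2 N),
          (2 : ℝ) ^ r / (N : ℝ) * (1 - (2 : ℝ) ^ (r - 1) / (N : ℝ)) ^ ((i : ℕ) + 1)) :
    (∫ ω, (∑ i : Fin n, (X i ω : ℝ)) ∂P = ∑ i : Fin n, (P {ω | X i ω = 1}).toReal) ∧
    ∫ ω, (∑ i : Fin n, (X i ω : ℝ)) ∂P ≤ 2 * (Nat.log 2 N : ℝ) + 1 := by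
  obtain ⟨m, rfl⟩ := hpow
  have hNpos : (0:ℝ) < (2:ℝ) ^ m := by positivity
  have hNnat : ((2 ^ m : ℕ) : ℝ) = (2:ℝ) ^ m := by push_cast; ring
  have hlog : Nat.log 2 (2 ^ m) = m := Nat.log_pow (by norm_num) m
  -- linearity of expectation
  have hind : ∀ i : Fin n, ∫ ω, (X i ω : ℝ) ∂P = (P {ω | X i ω = 1}).toReal := by
    intro i
    have hfun : ∀ ω, (X i ω : ℝ) = Set.indicator {ω | X i ω = 1} 1 ω := by
      intro ω
      rcases Nat.le_one_iff_eq_zero_or_eq_one.mp (hX i ω) with h | h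
      · simp [Set.indicator, h]
      · simp [Set.indicator, h]
    calc ∫ ω, (X i ω : ℝ) ∂P = ∫ ω, Set.indicator {ω | X i ω = 1} 1 ω ∂P := by
            exact integral_congr_ae (Filter.Eventually.of_forall hfun)
      _ = (P {ω | X i ω = 1}).toReal := integral_indicator_one .of_discrete
  have heq : ∫ ω, (∑ i : Fin n, (X i ω : ℝ)) ∂P
      = ∑ i : Fin n, (P {ω | X i ω = 1}).toReal := by
    rw [integral_finset_sum _ (fun i _ => Integrable.of_finite)]
    exact Finset.sum_congr rfl fun i _ => hind i
  refine ⟨heq, ?_⟩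
  rw [heq]
  -- bound each term and sum
  have step1 : ∑ i : Fin n, (P {ω | X i ω = 1}).toReal
      ≤ ∑ i : Fin n, (1 / ((2:ℝ) ^ m) + ∑ r ∈ Finset.Icc 1 m,
          (2 : ℝ) ^ r / ((2:ℝ) ^ m) * (1 - (2 : ℝ) ^ (r - 1) / ((2:ℝ) ^ m)) ^ ((i : ℕ) + 1)) := by
    apply Finset.sum_le_sum
    intro i _
    have := hbound i
    rwa [hNnat, hlog] at this
  refine step1.trans ?_
  rw [Finset.sum_add_distrib, Finset.sum_const, Finset.card_univ, Fintype.card_fin]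
  have h1 : (n : ℝ) * (1 / (2:ℝ) ^ m) ≤ 1 := by
    rw [mul_one_div, div_le_one hNpos]
    calc (n:ℝ) ≤ ((2^m : ℕ) : ℝ) := by exact_mod_cast hn
      _ = (2:ℝ)^m := hNnat
  have h2 : ∑ i : Fin n, ∑ r ∈ Finset.Icc 1 m,
      (2 : ℝ) ^ r / ((2:ℝ) ^ m) * (1 - (2 : ℝ) ^ (r - 1) / ((2:ℝ) ^ m)) ^ ((i : ℕ) + 1)
      ≤ 2 * m := by
    rw [Finset.sum_comm]
    calc ∑ r ∈ Finset.Icc 1 m, ∑ i : Fin n,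
          (2 : ℝ) ^ r / ((2:ℝ) ^ m) * (1 - (2 : ℝ) ^ (r - 1) / ((2:ℝ) ^ m)) ^ ((i : ℕ) + 1)
        ≤ ∑ r ∈ Finset.Icc 1 m, (2:ℝ) := by
          apply Finset.sum_le_sum
          intro r hr
          obtain ⟨hr1, hrm⟩ := Finset.mem_Icc.mp hr
          set q : ℝ := 1 - (2 : ℝ) ^ (r - 1) / ((2:ℝ) ^ m) with hqdef
          have hsub : (2:ℝ)^(r-1) ≤ (2:ℝ)^m :=
            pow_le_pow_right₀ (by norm_num) (le_trans (Nat.sub_le r 1) hrm)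
          have hq0 : 0 ≤ q := by
            rw [hqdef, sub_nonneg, div_le_one hNpos]; exact hsub
          have hq1 : q < 1 := by
            rw [hqdef, sub_lt_self_iff]; positivity
          have hgeom : ∑ i : Fin n, q ^ ((i:ℕ) + 1) ≤ 1 / (1 - q) := by
            calc ∑ i : Fin n, q ^ ((i:ℕ) + 1) ≤ ∑ i : Fin n, q ^ (i:ℕ) := by
                  apply Finset.sum_le_sum
                  intro i _
                  exact pow_le_pow_of_le_one hq0 hq1.le (Nat.le_succ _)
              _ = ∑ i ∈ Finset.range n, q ^ i := (Fin.sum_univ_eq_sum_range _ _)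
              _ ≤ 1 / (1 - q) := by
                  rw [geom_sum_eq hq1.ne]
                  have hflip : (q ^ n - 1) / (q - 1) = (1 - q ^ n) / (1 - q) := by
                    rw [← neg_div_neg_eq]; ring_nf
                  rw [hflip]
                  gcongr
                  · nlinarith [pow_nonneg hq0 n]
          have hfact : (2 : ℝ) ^ r / ((2:ℝ) ^ m) * (1 / (1 - q)) = 2 := by
            have h1q : 1 - q = (2:ℝ)^(r-1)/(2:ℝ)^m := by rw [hqdef]; ring
            have h2r : (2:ℝ)^r = 2 * (2:ℝ)^(r-1) := by
              rw [← pow_succ']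
              congr 1
              omega
            rw [h1q, one_div_div, div_mul_div_comm, h2r, div_eq_iff (by positivity)]
            ring
          calc ∑ i : Fin n, (2 : ℝ) ^ r / ((2:ℝ) ^ m) * q ^ ((i:ℕ)+1)
              = (2 : ℝ) ^ r / ((2:ℝ) ^ m) * ∑ i : Fin n, q ^ ((i:ℕ)+1) := by
                rw [Finset.mul_sum]
            _ ≤ (2 : ℝ) ^ r / ((2:ℝ) ^ m) * (1 / (1 - q)) := by
                apply mul_le_mul_of_nonneg_left hgeom (by positivity)
            _ = 2 := hfact
      _ = 2 * m := by
          rw [Finset.sum_const, Nat.card_Icc]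
          simp [nsmul_eq_mul, mul_comm]
  rw [hlog, nsmul_eq_mul]
  linarith
end
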